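/- Every subring of a principal ideal domain is contained in a principal ideal domain which is itself a subring of the original ring and has the same cardinality as the given subring (when the subring is infinite). -/

import Mathlib

open Cardinal

section Aux

variable {R : Type*} [CommRing R] [IsDomain R] [IsPrincipalIdealRing R]

private lemma gcd_data (a b : R) : ∃ g : R, ∃ u : R, ∃ v : R, ∃ a₁ : R, ∃ b₁ : R,
    u * a + v * b = g ∧ a = g * a₁ ∧ b = g * b₁ := by
  obtain ⟨g, hg⟩ := (IsPrincipalIdealRing.principal (Ideal.span ({a, b} : Set R))).principal
  rw [Ideal.submodule_span_eq] at hg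
  have hga : a ∈ Ideal.span ({g} : Set R) := by
    rw [← hg]; exact Ideal.subset_span (by simp)
  have hgb : b ∈ Ideal.span ({g} : Set R) := by
    rw [← hg]; exact Ideal.subset_span (by simp)
  obtain ⟨a₁, ha₁⟩ := Ideal.mem_span_singleton'.mp hga
  obtain ⟨b₁, hb₁⟩ := Ideal.mem_span_singleton'.mp hgb
  have hgmem : g ∈ Ideal.span ({a, b} : Set R) := by
    rw [hg]; exact Ideal.subset_span (by simp)
  obtain ⟨u, v, huv⟩ := Ideal.mem_span_pair.mp hgmem
  exact ⟨g, u, v, a₁, b₁, huv, ha₁.symm ▸ by ring, hb₁.symm ▸ by ring⟩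

/-- data function: for a pair `(a,b)` returns gcd data (indices 0-4) and `Ring.inverse a`
(index 5). -/
private noncomputable def gfun (a b : R) : Fin 6 → R := fun i =>
  let h := gcd_data a b
  let g := h.choose
  let u := h.choose_spec.choose
  let v := h.choose_spec.choose_spec.choose
  let a₁ := h.choose_spec.choose_spec.choose_spec.choose
  let b₁ := h.choose_spec.choose_spec.choose_spec.choose_spec.choose
  match i with
  | 0 => g
  | 1 => u
  | 2 => v
  | 3 => a₁
  | 4 => b₁
  | 5 => Ring.inverse a

private lemma gfun_spec (a b : R) :
    (gfun a b 1) * a + (gfun a b 2) * b = gfun a b 0 ∧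
      a = (gfun a b 0) * (gfun a b 3) ∧ b = (gfun a b 0) * (gfun a b 4) := by
  unfold gfun
  exact (gcd_data a b).choose_spec.choose_spec.choose_spec.choose_spec.choose_spec

/-- One closure step: add gcd data and inverses for all pairs from `s`. -/
private noncomputable def step (s : Subring R) : Subring R :=
  Subring.closure ((s : Set R) ∪
    Set.range (fun p : s × s × Fin 6 => gfun (p.1 : R) (p.2.1 : R) p.2.2))

private lemma le_step (s : Subring R) : s ≤ step s :=
  fun _ hx => Subring.subset_closure (Or.inl hx)

private lemma gfun_mem_step {s : Subring R} {a b : R} (ha : a ∈ s) (hb : b ∈ s) (i : Fin 6) :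
    gfun a b i ∈ step s :=
  Subring.subset_closure (Or.inr ⟨(⟨a, ha⟩, ⟨b, hb⟩, i), rfl⟩)

private noncomputable def ch (R₁ : Subring R) : ℕ → Subring R
  | 0 => R₁
  | n + 1 => step (ch R₁ n)

private lemma ch_mono (R₁ : Subring R) : Monotone (ch R₁) :=
  monotone_nat_of_le_succ fun n => le_step _

/-- The PID hull. -/
private noncomputable def hull (R₁ : Subring R) : Subring R := ⨆ n, ch R₁ n

private lemma mem_hull {R₁ : Subring R} {x : R} :
    x ∈ hull R₁ ↔ ∃ n, x ∈ ch R₁ n :=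
  Subring.mem_iSup_of_directed (ch_mono R₁).directed_le

private lemma hull_gcd (R₁ : Subring R) (a b : hull R₁) :
    ∃ g u v a₁ b₁ : hull R₁,
      u * a + v * b = g ∧ a = g * a₁ ∧ b = g * b₁ := by
  obtain ⟨n, hn⟩ := mem_hull.mp a.2
  obtain ⟨m, hm⟩ := mem_hull.mp b.2
  have ha : (a : R) ∈ ch R₁ (max n m) := ch_mono R₁ (le_max_left n m) hn
  have hb : (b : R) ∈ ch R₁ (max n m) := ch_mono R₁ (le_max_right n m) hm
  have hmem : ∀ i : Fin 6, gfun (a : R) (b : R) i ∈ hull R₁ := fun i =>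
    mem_hull.mpr ⟨max n m + 1, gfun_mem_step ha hb i⟩
  obtain ⟨h1, h2, h3⟩ := gfun_spec (a : R) (b : R)
  exact ⟨⟨_, hmem 0⟩, ⟨_, hmem 1⟩, ⟨_, hmem 2⟩, ⟨_, hmem 3⟩, ⟨_, hmem 4⟩,
    Subtype.ext (by push_cast; exact h1), Subtype.ext (by push_cast; exact h2),
    Subtype.ext (by push_cast; exact h3)⟩

private lemma hull_unit (R₁ : Subring R) (a : hull R₁) (h : IsUnit (a : R)) : IsUnit a := by
  obtain ⟨n, hn⟩ := mem_hull.mp a.2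
  have hinv : Ring.inverse (a : R) ∈ hull R₁ :=
    mem_hull.mpr ⟨n + 1, gfun_mem_step hn hn 5⟩
  refine IsUnit.of_mul_eq_one (a := a) ⟨Ring.inverse (a : R), hinv⟩ (Subtype.ext ?_)
  push_cast
  exact Ring.mul_inverse_cancel _ h

private lemma hull_isBezout (R₁ : Subring R) : IsBezout (hull R₁) := by
  rw [IsBezout.iff_span_pair_isPrincipal]
  intro x y
  obtain ⟨g, u, v, a₁, b₁, h1, h2, h3⟩ := hull_gcd R₁ x y
  refine ⟨⟨g, ?_⟩⟩
  rw [Ideal.submodule_span_eq]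
  refine le_antisymm ?_ ?_
  · rw [Ideal.span_le]
    rintro z (rfl | rfl)
    · exact Ideal.mem_span_singleton'.mpr ⟨a₁, by rw [h2]; ring⟩
    · exact Ideal.mem_span_singleton'.mpr ⟨b₁, by rw [h3]; ring⟩
  · rw [Ideal.span_le, Set.singleton_subset_iff]
    exact Ideal.mem_span_pair.mpr ⟨u, v, h1⟩

private lemma hull_wfDvdMonoid (R₁ : Subring R) : WfDvdMonoid (hull R₁) := by
  have key : ∀ x y : hull R₁, DvdNotUnit x y → DvdNotUnit (x : R) (y : R) := by
    rintro x y ⟨hx0, z, hz, hzy⟩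
    refine ⟨?_, (z : R), ?_, ?_⟩
    · intro h
      exact hx0 (Subtype.ext (by simpa using h))
    · intro hu
      exact hz (hull_unit R₁ z hu)
    · exact_mod_cast congrArg Subtype.val hzy
  constructor
  exact Subrelation.wf (r := InvImage DvdNotUnit (fun x : hull R₁ => (x : R)))
    (fun {x y} h => key x y h)
    (InvImage.wf _ wellFounded_dvdNotUnit)

private lemma hull_pid (R₁ : Subring R) : IsPrincipalIdealRing (hull R₁) := by
  have _ : IsBezout (hull R₁) := hull_isBezout R₁
  exact ((IsBezout.TFAE (R := hull R₁)).out 3 1).mp (hull_wfDvdMonoid R₁)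

/-- Cardinality bound for subring closure, via the known bound for subfield closure
in the fraction field. -/
private lemma card_subring_closure (t : Set R) :
    #(Subring.closure t) ≤ max #t ℵ₀ := by
  classical
  let F := FractionRing R
  let f : R →+* F := algebraMap R F
  have hf : Function.Injective f := IsFractionRing.injective R F
  let K := Subfield.closure (f '' t)
  have hle : Subring.closure t ≤ K.toSubring.comap f := by
    rw [Subring.closure_le]
    intro x hx
    exact Subfield.subset_closure ⟨x, hx, rfl⟩
  have h1 : #(Subring.closure t) ≤ #(K.toSubring.comap f) :=
    Cardinal.mk_le_mk_of_subset hle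
  have h2 : #(K.toSubring.comap f) ≤ #K :=
    Cardinal.mk_le_of_injective (f := fun x : K.toSubring.comap f => (⟨f x.1, x.2⟩ : K))
      (fun a b hab => Subtype.ext (hf (congrArg Subtype.val hab)))
  have h3 : #K ≤ max #(f '' t) ℵ₀ := Subfield.cardinalMk_closure_le_max _
  rw [Cardinal.mk_image_eq hf] at h3
  exact h1.trans (h2.trans h3)

private lemma card_ch (R₁ : Subring R) (n : ℕ) :
    #(ch R₁ n) ≤ max #R₁ ℵ₀ := by
  set κ := max #(R₁ : Subring R) ℵ₀ with hκdef
  have hκ : ℵ₀ ≤ κ := le_max_right _ _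
  induction n with
  | zero => exact le_max_left _ _
  | succ n IH =>
    show #(step (ch R₁ n)) ≤ κ
    set s := ch R₁ n
    have hp : #(↥s × ↥s × Fin 6) ≤ κ := by
      have h1 : #(↥s × ↥s × Fin 6) = #↥s * (#↥s * 6) := by
        simp [Cardinal.mk_prod]
      rw [h1]
      have h6 : (6 : Cardinal) ≤ κ := le_trans (show (6 : Cardinal) < ℵ₀ by exact_mod_cast Cardinal.nat_lt_aleph0 6).le hκ
      calc #↥s * (#↥s * 6) ≤ κ * (κ * κ) := by gcongr
        _ = κ := by rw [Cardinal.mul_eq_self hκ, Cardinal.mul_eq_self hκ]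
    have hU : #((s : Set R) ∪
        Set.range (fun p : s × s × Fin 6 => gfun (p.1 : R) (p.2.1 : R) p.2.2) : Set R) ≤ κ := by
      refine le_trans (Cardinal.mk_union_le _ _) (Cardinal.add_le_of_le hκ IH ?_)
      exact le_trans Cardinal.mk_range_le hp
    exact le_trans (card_subring_closure _) (max_le hU hκ)

private lemma card_hull (R₁ : Subring R) : #(hull R₁) ≤ max #R₁ ℵ₀ := by
  set κ := max #(R₁ : Subring R) ℵ₀ with hκdef
  have hκ : ℵ₀ ≤ κ := le_max_right _ _
  have hcoe : ((hull R₁ : Subring R) : Set R) = ⋃ n, (ch R₁ n : Set R) :=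
    Subring.coe_iSup_of_directed (ch_mono R₁).directed_le
  have h1 : #(hull R₁) = #(⋃ n, (ch R₁ n : Set R)) := by
    rw [show ((hull R₁ : Subring R) : Type _) = ((⋃ n, (ch R₁ n : Set R)) : Type _) by
      rw [← hcoe]; rfl]
  rw [h1]
  have h2 := Cardinal.mk_iUnion_le_lift (fun n => (ch R₁ n : Set R))
  rw [Cardinal.lift_uzero] at h2
  refine h2.trans ?_
  have h3 : (⨆ n, Cardinal.lift.{0} #(ch R₁ n : Set R)) ≤ κ := by
    refine ciSup_le' fun n => ?_
    rw [Cardinal.lift_uzero]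
    exact card_ch R₁ n
  refine le_trans (mul_le_mul' le_rfl h3) ?_
  have : Cardinal.lift.{_} #ℕ = ℵ₀ := by simp
  rw [this, Cardinal.aleph0_mul_eq hκ]

end Aux

/-- Every subring of a principal ideal domain is contained in a principal ideal
domain which is itself a subring of the original ring and has the same
cardinality as the given subring (when the subring is infinite). -/
theorem subring_of_PID_contained_in_PID_subring
    (R : Type*) [CommRing R] [IsDomain R] [IsPrincipalIdealRing R]
    (R₁ : Subring R) :
    ∃ R₂ : Subring R, R₁ ≤ R₂ ∧ IsDomain R₂ ∧ IsPrincipalIdealRing R₂ ∧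
      (Infinite R₁ → Cardinal.mk R₂ = Cardinal.mk R₁) := by
  refine ⟨hull R₁, le_iSup (ch R₁) 0, inferInstance, hull_pid R₁, fun hInf => ?_⟩
  haveI : Infinite R₁ := hInf
  refine le_antisymm ?_ (Cardinal.mk_le_mk_of_subset (SetLike.coe_subset_coe.mpr
    (le_iSup (ch R₁) 0)))
  have := card_hull R₁
  rwa [max_eq_left (Cardinal.aleph0_le_mk R₁)] at this
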